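/- arXiv:1103.3588 — 4 statements merged into one kernel-verified Lean document; each statement's English description precedes it below -/
import Mathlib

section
/- Let H be an induced subgraph of a connected simple graph G such that diam(H) = 2 and β(H) = n(H) − t for some positive integer t. Then β(G) ≤ n(G) − t. -/
namespace PaperMetricDim

open SimpleGraph

variable {V : Type*}

/-- A set `W` of vertices resolves the graph `G`: any two distinct vertices have
different distance to some vertex of `W`. -/
def Resolves (G : SimpleGraph V) (W : Set V) : Prop :=
  ∀ u v : V, u ≠ v → ∃ w ∈ W, G.dist u w ≠ G.dist v w

/-- The metric dimension of `G`: the minimum cardinality of a resolving set. -/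
noncomputable def metricDim (G : SimpleGraph V) : ℕ :=
  sInf {k : ℕ | ∃ W : Set V, Resolves G W ∧ W.ncard = k}

/-- `G` is connected and has diameter exactly `d`. -/
def diamEq (G : SimpleGraph V) (d : ℕ) : Prop :=
  G.Connected ∧ (∀ u v : V, G.dist u v ≤ d) ∧ ∃ u v : V, G.dist u v = d

/-- A set of vertices is homogeneous if it induces a complete or an empty subgraph. -/
def Homogeneous (G : SimpleGraph V) (S : Set V) : Prop :=
  (∀ a ∈ S, ∀ b ∈ S, a ≠ b → G.Adj a b) ∨ (∀ a ∈ S, ∀ b ∈ S, ¬ G.Adj a b)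

/-- Two distinct vertices are twins: they have the same neighbours apart from
each other. -/
def Twins (G : SimpleGraph V) (u v : V) : Prop :=
  u ≠ v ∧ G.neighborSet u \ {v} = G.neighborSet v \ {u}

/-- The twin equivalence relation: equal or twins. -/
def twinRel (G : SimpleGraph V) (u v : V) : Prop := u = v ∨ Twins G u v

/-- The twin class of a vertex. -/
def twinClass (G : SimpleGraph V) (v : V) : Set V := {u : V | twinRel G v u}

/-- The vertices of the twin graph: twin equivalence classes. -/
def TwinVertex (G : SimpleGraph V) : Type _ := {S : Set V // ∃ v : V, S = twinClass G v}

/-- The twin graph `G*` of `G`: twin classes, two distinct classes being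
adjacent iff (some, equivalently all) representatives are adjacent in `G`. -/
def twinGraph (G : SimpleGraph V) : SimpleGraph (TwinVertex G) where
  Adj A B := A ≠ B ∧ ∃ a ∈ A.1, ∃ b ∈ B.1, G.Adj a b
  symm := by
    constructor
    rintro A B ⟨hne, a, ha, b, hb, hab⟩
    exact ⟨hne.symm, b, hb, a, ha, hab.symm⟩
  loopless := by constructor; rintro A ⟨hne, -⟩; exact hne rfl

/-- The twin class of `v`, as a vertex of the twin graph. -/
def cls (G : SimpleGraph V) (v : V) : TwinVertex G := ⟨twinClass G v, v, rfl⟩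

/-- A twin-graph vertex of type (1): a singleton class. -/
def typeOne (G : SimpleGraph V) (A : TwinVertex G) : Prop := ∃ v : V, A.1 = {v}

/-- A twin-graph vertex of type (K): a class with at least two vertices inducing
a complete subgraph. -/
def typeK (G : SimpleGraph V) (A : TwinVertex G) : Prop :=
  A.1.Nontrivial ∧ ∀ a ∈ A.1, ∀ b ∈ A.1, a ≠ b → G.Adj a b

/-- A twin-graph vertex of type (N): a class with at least two vertices inducing
an empty subgraph. -/
def typeN (G : SimpleGraph V) (A : TwinVertex G) : Prop :=
  A.1.Nontrivial ∧ ∀ a ∈ A.1, ∀ b ∈ A.1, ¬ G.Adj a b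

/-- Type (1K): type (1) or type (K). -/
def type1K (G : SimpleGraph V) (A : TwinVertex G) : Prop := typeOne G A ∨ typeK G A

/-- Type (1N): type (1) or type (N). -/
def type1N (G : SimpleGraph V) (A : TwinVertex G) : Prop := typeOne G A ∨ typeN G A

/-- Type (KN): type (K) or type (N). -/
def typeKN (G : SimpleGraph V) (A : TwinVertex G) : Prop := typeK G A ∨ typeN G A

/-- `Γ_i(v)`: the set of vertices at distance `i` from `v`. -/
def Gamma (G : SimpleGraph V) (i : ℕ) (v : V) : Set V := {u : V | G.dist u v = i}

/-- `Γ_i^*(v^*)`: the set of twin-graph vertices at distance `i` from `v^*`. -/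
def GammaStar (G : SimpleGraph V) (i : ℕ) (v : V) : Set (TwinVertex G) :=
  {A : TwinVertex G | (twinGraph G).dist A (cls G v) = i}

/-- `R_1(v)`: neighbours of `v` having a neighbour at distance 2 from `v`. -/
def R1 (G : SimpleGraph V) (v : V) : Set V :=
  {x ∈ Gamma G 1 v | ∃ y ∈ Gamma G 2 v, G.Adj x y}

/-- `R_2(v) = Γ_1(v) \ R_1(v)`. -/
def R2 (G : SimpleGraph V) (v : V) : Set V := Gamma G 1 v \ R1 G v

/-- `R_1^*(v^*)`: twin-graph neighbours of `v^*` having a neighbour in `Γ_2^*(v^*)`. -/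
def R1Star (G : SimpleGraph V) (v : V) : Set (TwinVertex G) :=
  {A ∈ GammaStar G 1 v | ∃ B ∈ GammaStar G 2 v, (twinGraph G).Adj A B}

/-- `R_2^*(v^*) = Γ_1^*(v^*) \ R_1^*(v^*)`. -/
def R2Star (G : SimpleGraph V) (v : V) : Set (TwinVertex G) :=
  GammaStar G 1 v \ R1Star G v

/-- `M_1(x) = Γ_1(v) ∩ Γ_1(x)` (for `x ∈ Γ_1(v)`). -/
def M1 (G : SimpleGraph V) (v x : V) : Set V := Gamma G 1 v ∩ Gamma G 1 x

/-- `M_2(x) = Γ_1(v) ∩ Γ_2(x)` (for `x ∈ Γ_1(v)`). -/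
def M2 (G : SimpleGraph V) (v x : V) : Set V := Gamma G 1 v ∩ Gamma G 2 x

/-- Structure `G_1`: the twin graph is `K_3` and has at most one vertex of type (1K). -/
def structG1 (G : SimpleGraph V) : Prop :=
  ∃ a b c : TwinVertex G, a ≠ b ∧ a ≠ c ∧ b ≠ c ∧
    (∀ X : TwinVertex G, X = a ∨ X = b ∨ X = c) ∧
    (twinGraph G).Adj a b ∧ (twinGraph G).Adj a c ∧ (twinGraph G).Adj b c ∧
    (∀ X Y : TwinVertex G, type1K G X → type1K G Y → X = Y)

/-- Structure `G_2`: the twin graph is the path `P_3` with (a) centre of type (N)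
and some leaf of type (K), or (b) one leaf of type (K) and the other of type (KN). -/
def structG2 (G : SimpleGraph V) : Prop :=
  ∃ a b c : TwinVertex G, a ≠ b ∧ a ≠ c ∧ b ≠ c ∧
    (∀ X : TwinVertex G, X = a ∨ X = b ∨ X = c) ∧
    (twinGraph G).Adj a b ∧ (twinGraph G).Adj b c ∧ ¬ (twinGraph G).Adj a c ∧
    ((typeN G b ∧ (typeK G a ∨ typeK G c)) ∨
     (typeK G a ∧ typeKN G c) ∨ (typeK G c ∧ typeKN G a))

/-- Structure `G_3`: the twin graph is the paw, the triangle being `u, p, q` with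
the pendant vertex `l` attached to `u`; `p` is of type (N), `q` of type (1K),
`l` of type (1N); and if `q` is of type (K) then neither `l` nor `u` is of type (N). -/
def structG3 (G : SimpleGraph V) : Prop :=
  ∃ u p q l : TwinVertex G,
    u ≠ p ∧ u ≠ q ∧ u ≠ l ∧ p ≠ q ∧ p ≠ l ∧ q ≠ l ∧
    (∀ X : TwinVertex G, X = u ∨ X = p ∨ X = q ∨ X = l) ∧
    (twinGraph G).Adj u p ∧ (twinGraph G).Adj u q ∧ (twinGraph G).Adj p q ∧
    (twinGraph G).Adj u l ∧ ¬ (twinGraph G).Adj p l ∧ ¬ (twinGraph G).Adj q l ∧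
    typeN G p ∧ type1K G q ∧ type1N G l ∧
    (typeK G q → ¬ typeN G l ∧ ¬ typeN G u)

/-- Structure `G_4`: the twin graph is the cycle `C_5` and every vertex is of type (1). -/
def structG4 (G : SimpleGraph V) : Prop :=
  ∃ v0 v1 v2 v3 v4 : TwinVertex G,
    v0 ≠ v1 ∧ v0 ≠ v2 ∧ v0 ≠ v3 ∧ v0 ≠ v4 ∧ v1 ≠ v2 ∧ v1 ≠ v3 ∧ v1 ≠ v4 ∧
    v2 ≠ v3 ∧ v2 ≠ v4 ∧ v3 ≠ v4 ∧
    (∀ X : TwinVertex G, X = v0 ∨ X = v1 ∨ X = v2 ∨ X = v3 ∨ X = v4) ∧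
    (twinGraph G).Adj v0 v1 ∧ (twinGraph G).Adj v1 v2 ∧ (twinGraph G).Adj v2 v3 ∧
    (twinGraph G).Adj v3 v4 ∧ (twinGraph G).Adj v4 v0 ∧
    ¬ (twinGraph G).Adj v0 v2 ∧ ¬ (twinGraph G).Adj v1 v3 ∧ ¬ (twinGraph G).Adj v2 v4 ∧
    ¬ (twinGraph G).Adj v3 v0 ∧ ¬ (twinGraph G).Adj v4 v1 ∧
    (∀ X : TwinVertex G, typeOne G X)

/-- Structure `G_5`: the twin graph is `C_5` with one chord (cycle `v0 v1 v2 v3 v4`,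
chord `v0 v2`); the two adjacent degree-2 vertices `v3, v4` are of type (1), the
other vertices of type (1K). -/
def structG5 (G : SimpleGraph V) : Prop :=
  ∃ v0 v1 v2 v3 v4 : TwinVertex G,
    v0 ≠ v1 ∧ v0 ≠ v2 ∧ v0 ≠ v3 ∧ v0 ≠ v4 ∧ v1 ≠ v2 ∧ v1 ≠ v3 ∧ v1 ≠ v4 ∧
    v2 ≠ v3 ∧ v2 ≠ v4 ∧ v3 ≠ v4 ∧
    (∀ X : TwinVertex G, X = v0 ∨ X = v1 ∨ X = v2 ∨ X = v3 ∨ X = v4) ∧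
    (twinGraph G).Adj v0 v1 ∧ (twinGraph G).Adj v1 v2 ∧ (twinGraph G).Adj v2 v3 ∧
    (twinGraph G).Adj v3 v4 ∧ (twinGraph G).Adj v4 v0 ∧ (twinGraph G).Adj v0 v2 ∧
    ¬ (twinGraph G).Adj v1 v3 ∧ ¬ (twinGraph G).Adj v1 v4 ∧ ¬ (twinGraph G).Adj v2 v4 ∧
    typeOne G v3 ∧ typeOne G v4 ∧ type1K G v0 ∧ type1K G v1 ∧ type1K G v2

/-- Structure `G_6`: the twin graph is `C_5` with two adjacent chords (cycle
`v0 v1 v2 v3 v4`, chords `v0 v2` and `v0 v3`, so `v0` has degree 4); `v0` is of any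
type, the other vertices of type (1K); no two non-adjacent vertices are both of
type (K), and no two adjacent vertices have the different types (K) and (N). -/
def structG6 (G : SimpleGraph V) : Prop :=
  ∃ v0 v1 v2 v3 v4 : TwinVertex G,
    v0 ≠ v1 ∧ v0 ≠ v2 ∧ v0 ≠ v3 ∧ v0 ≠ v4 ∧ v1 ≠ v2 ∧ v1 ≠ v3 ∧ v1 ≠ v4 ∧
    v2 ≠ v3 ∧ v2 ≠ v4 ∧ v3 ≠ v4 ∧
    (∀ X : TwinVertex G, X = v0 ∨ X = v1 ∨ X = v2 ∨ X = v3 ∨ X = v4) ∧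
    (twinGraph G).Adj v0 v1 ∧ (twinGraph G).Adj v1 v2 ∧ (twinGraph G).Adj v2 v3 ∧
    (twinGraph G).Adj v3 v4 ∧ (twinGraph G).Adj v4 v0 ∧ (twinGraph G).Adj v0 v2 ∧
    (twinGraph G).Adj v0 v3 ∧
    ¬ (twinGraph G).Adj v1 v3 ∧ ¬ (twinGraph G).Adj v1 v4 ∧ ¬ (twinGraph G).Adj v2 v4 ∧
    type1K G v1 ∧ type1K G v2 ∧ type1K G v3 ∧ type1K G v4 ∧
    (∀ X Y : TwinVertex G, X ≠ Y → ¬ (twinGraph G).Adj X Y →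
      ¬ (typeK G X ∧ typeK G Y)) ∧
    (∀ X Y : TwinVertex G, (twinGraph G).Adj X Y → ¬ (typeK G X ∧ typeN G Y))

/-- Structure `G_7`: the twin graph is the kite (`K_4` minus an edge, vertices
`a, b` of degree 3 in the kite and `c, d` the non-adjacent pair) with a pendant
vertex `l` attached to the degree-3 vertex `a`; `l` is of type (1), `a` and `b`
are of type (1K), one of `c, d` is of type (K) and the other of type (1). -/
def structG7 (G : SimpleGraph V) : Prop :=
  ∃ a b c d l : TwinVertex G,
    a ≠ b ∧ a ≠ c ∧ a ≠ d ∧ a ≠ l ∧ b ≠ c ∧ b ≠ d ∧ b ≠ l ∧ c ≠ d ∧ c ≠ l ∧ d ≠ l ∧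
    (∀ X : TwinVertex G, X = a ∨ X = b ∨ X = c ∨ X = d ∨ X = l) ∧
    (twinGraph G).Adj a b ∧ (twinGraph G).Adj a c ∧ (twinGraph G).Adj a d ∧
    (twinGraph G).Adj b c ∧ (twinGraph G).Adj b d ∧ (twinGraph G).Adj a l ∧
    ¬ (twinGraph G).Adj c d ∧ ¬ (twinGraph G).Adj b l ∧ ¬ (twinGraph G).Adj c l ∧
    ¬ (twinGraph G).Adj d l ∧
    typeOne G l ∧ type1K G a ∧ type1K G b ∧ typeK G c ∧ typeOne G d

/-- Structure `G_8`: the twin graph is the kite (`K_4` minus an edge, `a, b` of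
degree 3 and `c, d` the non-adjacent degree-2 pair); one degree-2 vertex `c` is of
type (K) and the other `d` of type (1); one degree-3 vertex `a` is of type (N)
and the other `b` of type (1K). -/
def structG8 (G : SimpleGraph V) : Prop :=
  ∃ a b c d : TwinVertex G,
    a ≠ b ∧ a ≠ c ∧ a ≠ d ∧ b ≠ c ∧ b ≠ d ∧ c ≠ d ∧
    (∀ X : TwinVertex G, X = a ∨ X = b ∨ X = c ∨ X = d) ∧
    (twinGraph G).Adj a b ∧ (twinGraph G).Adj a c ∧ (twinGraph G).Adj a d ∧
    (twinGraph G).Adj b c ∧ (twinGraph G).Adj b d ∧ ¬ (twinGraph G).Adj c d ∧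
    typeN G a ∧ type1K G b ∧ typeK G c ∧ typeOne G d

/-- Structure `G_9`: the twin graph is `C_4`, two adjacent vertices of type (K)
and the other two of type (1). -/
def structG9 (G : SimpleGraph V) : Prop :=
  ∃ v0 v1 v2 v3 : TwinVertex G,
    v0 ≠ v1 ∧ v0 ≠ v2 ∧ v0 ≠ v3 ∧ v1 ≠ v2 ∧ v1 ≠ v3 ∧ v2 ≠ v3 ∧
    (∀ X : TwinVertex G, X = v0 ∨ X = v1 ∨ X = v2 ∨ X = v3) ∧
    (twinGraph G).Adj v0 v1 ∧ (twinGraph G).Adj v1 v2 ∧ (twinGraph G).Adj v2 v3 ∧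
    (twinGraph G).Adj v3 v0 ∧ ¬ (twinGraph G).Adj v0 v2 ∧ ¬ (twinGraph G).Adj v1 v3 ∧
    typeK G v0 ∧ typeK G v1 ∧ typeOne G v2 ∧ typeOne G v3

/-- Structure `G_10`: the twin graph is the wheel `C_4 ∨ K_1` (hub `h`, rim
`v0 v1 v2 v3`); two adjacent rim (degree-3) vertices `v0, v1` are of type (K), the
hub is of type (1K), and the other vertices of type (1). -/
def structG10 (G : SimpleGraph V) : Prop :=
  ∃ h v0 v1 v2 v3 : TwinVertex G,
    h ≠ v0 ∧ h ≠ v1 ∧ h ≠ v2 ∧ h ≠ v3 ∧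
    v0 ≠ v1 ∧ v0 ≠ v2 ∧ v0 ≠ v3 ∧ v1 ≠ v2 ∧ v1 ≠ v3 ∧ v2 ≠ v3 ∧
    (∀ X : TwinVertex G, X = h ∨ X = v0 ∨ X = v1 ∨ X = v2 ∨ X = v3) ∧
    (twinGraph G).Adj h v0 ∧ (twinGraph G).Adj h v1 ∧ (twinGraph G).Adj h v2 ∧
    (twinGraph G).Adj h v3 ∧
    (twinGraph G).Adj v0 v1 ∧ (twinGraph G).Adj v1 v2 ∧ (twinGraph G).Adj v2 v3 ∧
    (twinGraph G).Adj v3 v0 ∧ ¬ (twinGraph G).Adj v0 v2 ∧ ¬ (twinGraph G).Adj v1 v3 ∧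
    typeK G v0 ∧ typeK G v1 ∧ type1K G h ∧ typeOne G v2 ∧ typeOne G v3


/-- Helper: distance in a diameter-2 induced subgraph is `min (G.dist) 2`. -/
lemma dist_induce_eq_min {V : Type*} (G : SimpleGraph V) (hG : G.Connected)
    (s : Set V) (hconn : (G.induce s).Connected)
    (hle : ∀ u v : ↥s, (G.induce s).dist u v ≤ 2) (a b : ↥s) :
    (G.induce s).dist a b = min (G.dist ↑a ↑b) 2 := by
  by_cases hab : a = b
  · subst hab; simp [SimpleGraph.dist_self]
  have hne : (a : V) ≠ (b : V) := fun h => hab (Subtype.ext h)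
  by_cases hadj : G.Adj ↑a ↑b
  · have h1 : (G.induce s).Adj a b := hadj
    rw [(SimpleGraph.dist_eq_one_iff_adj).2 h1, (SimpleGraph.dist_eq_one_iff_adj).2 hadj]
    simp
  · have hH0 : (G.induce s).dist a b ≠ 0 := by
      have := (hconn.pos_dist_of_ne hab); omega
    have hH1 : (G.induce s).dist a b ≠ 1 := by
      intro h
      have : (G.induce s).Adj a b := (SimpleGraph.dist_eq_one_iff_adj (G := G.induce s)).1 h
      exact hadj this
    have hH : (G.induce s).dist a b = 2 := by have := hle a b; omega
    have hG0 : G.dist ↑a ↑b ≠ 0 := by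
      have := hG.pos_dist_of_ne hne; omega
    have hG1 : G.dist ↑a ↑b ≠ 1 := fun h => hadj ((SimpleGraph.dist_eq_one_iff_adj).1 h)
    rw [hH]
    omega

/-- If `H = G[s]` is an induced subgraph of a connected graph `G` with
`diam(H) = 2` and `β(H) = n(H) - t` for some positive `t`, then `β(G) ≤ n(G) - t`. -/
theorem metricDim_le_of_induced_diam_two
    {V : Type*} [Fintype V] (G : SimpleGraph V) (hG : G.Connected)
    (s : Set V) (t : ℕ) (ht : 0 < t)
    (hdiam : diamEq (G.induce s) 2)
    (hbeta : metricDim (G.induce s) = Nat.card s - t) :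
    metricDim G ≤ Fintype.card V - t := by
  classical
  obtain ⟨hconn, hle2, u0, v0, hd2⟩ := hdiam
  have hu0v0 : u0 ≠ v0 := by
    intro h; subst h; rw [SimpleGraph.dist_self] at hd2; omega
  -- the defining set of metricDim H is nonempty
  have hne : {k : ℕ | ∃ W : Set ↥s, Resolves (G.induce s) W ∧ W.ncard = k}.Nonempty := by
    refine ⟨(Set.univ : Set ↥s).ncard, Set.univ, ?_, rfl⟩
    intro u v huv
    refine ⟨u, Set.mem_univ u, ?_⟩
    rw [SimpleGraph.dist_self]
    have := hconn.pos_dist_of_ne (Ne.symm huv)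
    omega
  have hmem := Nat.sInf_mem hne
  obtain ⟨R, hR, hRcard⟩ := hmem
  have hdim : metricDim (G.induce s)
      = sInf {k : ℕ | ∃ W : Set ↥s, Resolves (G.induce s) W ∧ W.ncard = k} := rfl
  have hRval : R.ncard = Nat.card ↥s - t := by
    rw [hRcard, ← hdim, hbeta]
  -- metricDim H ≥ 1
  have hpos : metricDim (G.induce s) ≠ 0 := by
    intro h0
    have hR0 : R.ncard = 0 := by rw [hRcard, ← hdim, h0]
    have : R = ∅ := (Set.ncard_eq_zero (Set.toFinite R)).1 hR0
    obtain ⟨w, hw, -⟩ := hR u0 v0 hu0v0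
    rw [this] at hw; exact hw
  have htcard : t < Nat.card s := by
    rw [hbeta] at hpos; omega
  -- the set S of removed vertices
  set S : Set V := Subtype.val '' (Rᶜ : Set ↥s) with hS
  have hScard : S.ncard = t := by
    have h1 : (Rᶜ : Set ↥s).ncard = Nat.card ↥s - R.ncard := by
      have := Set.ncard_add_ncard_compl R (Set.toFinite R) (Set.toFinite _)
      omega
    rw [hS, Set.ncard_image_of_injective _ Subtype.coe_injective, h1, hRval]
    omega
  have hresolve : Resolves G Sᶜ := by
    intro u v huv
    by_cases hu : u ∈ (Sᶜ : Set V)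
    · refine ⟨u, hu, ?_⟩
      rw [SimpleGraph.dist_self, SimpleGraph.dist_comm]
      have := hG.pos_dist_of_ne huv
      omega
    by_cases hv : v ∈ (Sᶜ : Set V)
    · refine ⟨v, hv, ?_⟩
      rw [SimpleGraph.dist_self]
      have := hG.pos_dist_of_ne huv
      omega
    -- both u, v in S
    simp only [Set.mem_compl_iff, not_not] at hu hv
    obtain ⟨u', hu'R, hu'⟩ := hu
    obtain ⟨v', hv'R, hv'⟩ := hv
    have huv' : u' ≠ v' := by
      intro h; apply huv; rw [← hu', ← hv', h]
    obtain ⟨w, hwR, hw⟩ := hR u' v' huv'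
    refine ⟨↑w, ?_, ?_⟩
    · intro hwS
      obtain ⟨w', hw'R, hw'⟩ := hwS
      have : w' = w := Subtype.ext hw'
      rw [this] at hw'R; exact hw'R hwR
    · rw [dist_induce_eq_min G hG s hconn hle2 u' w,
        dist_induce_eq_min G hG s hconn hle2 v' w] at hw
      rw [hu', hv'] at hw
      omega
  have hWcard : (Sᶜ : Set V).ncard = Fintype.card V - t := by
    have := Set.ncard_add_ncard_compl S (Set.toFinite S) (Set.toFinite _)
    rw [hScard] at this
    rw [Nat.card_eq_fintype_card] at this
    omega
  exact Nat.sInf_le ⟨Sᶜ, hresolve, hWcard⟩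


end PaperMetricDim
end

section
/- Let H be an induced subgraph of a connected simple graph G, and let G be an induced subgraph of a connected simple graph R, where diam(H) = diam(G) = 2, β(R) = n(R) − t, and β(H) = n(H) − t for some positive integer t. Then β(G) = n(G) − t. -/
namespace PaperMetricDim

open SimpleGraph

variable {V : Type*}

lemma resolves_univ (G : SimpleGraph V) (hG : G.Connected) : Resolves G Set.univ := by
  intro u v huv
  refine ⟨u, Set.mem_univ u, ?_⟩
  rw [SimpleGraph.dist_self]
  exact fun h => huv ((hG.dist_eq_zero_iff.mp h.symm)).symm

lemma dist_induce (G : SimpleGraph V) (s : Set V)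
    (hconn : (G.induce s).Connected) (a b : ↥s)
    (h2 : (G.induce s).dist a b ≤ 2) :
    G.dist a.1 b.1 = (G.induce s).dist a b := by
  rcases eq_or_ne a b with rfl | hne
  · rw [SimpleGraph.dist_self, SimpleGraph.dist_self]
  have hne' : a.1 ≠ b.1 := fun h => hne (Subtype.ext h)
  have hreach : (G.induce s).Reachable a b := hconn a b
  obtain ⟨p, hp⟩ := hreach.exists_walk_length_eq_dist
  let f : G.induce s →g G := ⟨Subtype.val, fun h => h⟩
  have hle : G.dist a.1 b.1 ≤ (G.induce s).dist a b := by
    have := SimpleGraph.dist_le (p.map f)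
    rw [SimpleGraph.Walk.length_map, hp] at this
    exact this
  have hpos : 0 < (G.induce s).dist a b := hreach.pos_dist_of_ne hne
  have hGreach : G.Reachable a.1 b.1 := ⟨(p.map f : G.Walk a.1 b.1)⟩
  have hGpos : 0 < G.dist a.1 b.1 := hGreach.pos_dist_of_ne hne'
  interval_cases h : (G.induce s).dist a b
  · exact SimpleGraph.dist_eq_one_iff_adj.mpr
      ((SimpleGraph.dist_eq_one_iff_adj (G := G.induce s)).mp h)
  · have hn1 : G.dist a.1 b.1 ≠ 1 := by
      intro h1
      have hadj : (G.induce s).Adj a b := (SimpleGraph.dist_eq_one_iff_adj (G := G)).mp h1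
      have := (SimpleGraph.dist_eq_one_iff_adj (G := G.induce s)).mpr hadj
      omega
    omega

lemma key [Finite V] (G : SimpleGraph V) (hG : G.Connected)
    (s : Set V) (hconn : (G.induce s).Connected)
    (hdiam : ∀ u v : ↥s, (G.induce s).dist u v ≤ 2) :
    metricDim G + Nat.card s ≤ metricDim (G.induce s) + Nat.card V := by
  classical
  have hne : {k : ℕ | ∃ W : Set ↥s, Resolves (G.induce s) W ∧ W.ncard = k}.Nonempty :=
    ⟨(Set.univ : Set ↥s).ncard, Set.univ, resolves_univ _ hconn, rfl⟩
  obtain ⟨S, hS, hScard⟩ := Nat.sInf_mem hne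
  set W : Set V := (Subtype.val '' S) ∪ sᶜ with hW
  have hres : Resolves G W := by
    intro u v huv
    by_cases hu : u ∈ W
    · refine ⟨u, hu, ?_⟩
      rw [SimpleGraph.dist_self]
      exact fun h => huv (hG.dist_eq_zero_iff.mp h.symm).symm
    by_cases hv : v ∈ W
    · refine ⟨v, hv, ?_⟩
      rw [SimpleGraph.dist_self]
      exact fun h => huv (hG.dist_eq_zero_iff.mp h)
    have hus : u ∈ s := by
      by_contra h; exact hu (Or.inr h)
    have hvs : v ∈ s := by
      by_contra h; exact hv (Or.inr h)
    obtain ⟨w, hwS, hwd⟩ := hS ⟨u, hus⟩ ⟨v, hvs⟩ (fun h => huv (congrArg Subtype.val h))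
    refine ⟨w.1, Or.inl ⟨w, hwS, rfl⟩, ?_⟩
    rw [dist_induce G s hconn ⟨u, hus⟩ w (hdiam _ _),
      dist_induce G s hconn ⟨v, hvs⟩ w (hdiam _ _)]
    exact hwd
  have h1 : metricDim G ≤ W.ncard := Nat.sInf_le ⟨W, hres, rfl⟩
  have h2 : W.ncard ≤ S.ncard + sᶜ.ncard := by
    refine le_trans (Set.ncard_union_le _ _) ?_
    rw [Set.ncard_image_of_injective _ Subtype.val_injective]
  have h3 : s.ncard + sᶜ.ncard = Nat.card V := Set.ncard_add_ncard_compl s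
  have h4 : Nat.card ↥s = s.ncard := Nat.card_coe_set_eq s
  have h5 : S.ncard = metricDim (G.induce s) := hScard
  omega

lemma metricDim_pos [Finite V] (G : SimpleGraph V)
    (h : ∃ u v : V, u ≠ v)
    (hne : {k : ℕ | ∃ W : Set V, Resolves G W ∧ W.ncard = k}.Nonempty) :
    0 < metricDim G := by
  obtain ⟨S, hS, hScard⟩ := Nat.sInf_mem hne
  obtain ⟨u, v, huv⟩ := h
  rcases Nat.eq_zero_or_pos (metricDim G) with hz | hp
  · exfalso
    have h0 : S.ncard = 0 := by rw [hScard]; exact hz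
    have hSe : S = ∅ := (Set.ncard_eq_zero (Set.toFinite S)).mp h0
    obtain ⟨w, hw, -⟩ := hS u v huv
    rw [hSe] at hw; exact hw
  · exact hp

/-- If `H` is an induced subgraph of `G`, `G` is an induced subgraph of `R`,
`diam(H) = diam(G) = 2`, `β(R) = n(R) - t` and `β(H) = n(H) - t` for some positive
`t`, then `β(G) = n(G) - t`. -/
theorem metricDim_eq_of_sandwich
    {W : Type*} [Fintype W] (R : SimpleGraph W) (hR : R.Connected)
    (sG : Set W) (sH : Set ↥sG) (t : ℕ) (ht : 0 < t)
    (hdiamG : diamEq (R.induce sG) 2)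
    (hdiamH : diamEq ((R.induce sG).induce sH) 2)
    (hbetaR : metricDim R = Fintype.card W - t)
    (hbetaH : metricDim ((R.induce sG).induce sH) = Nat.card sH - t) :
    metricDim (R.induce sG) = Nat.card sG - t := by
  obtain ⟨hconnG, hd2G, -⟩ := hdiamG
  obtain ⟨hconnH, hd2H, u, v, huv2⟩ := hdiamH
  have huv : u ≠ v := by
    rintro rfl
    rw [SimpleGraph.dist_self] at huv2
    omega
  have key1 := key R hR sG hconnG hd2G
  have key2 := key (R.induce sG) hconnG sH hconnH hd2H
  have posH : 0 < metricDim ((R.induce sG).induce sH) :=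
    metricDim_pos _ ⟨u, v, huv⟩ ⟨_, Set.univ, resolves_univ _ hconnH, rfl⟩
  have posR : 0 < metricDim R := by
    refine metricDim_pos _ ⟨u.1.1, v.1.1, ?_⟩ ⟨_, Set.univ, resolves_univ _ hR, rfl⟩
    exact fun h => huv (Subtype.ext (Subtype.ext h))
  have cHG : Nat.card ↥sH ≤ Nat.card ↥sG :=
    Nat.card_le_card_of_injective Subtype.val Subtype.val_injective
  have cGW : Nat.card ↥sG ≤ Nat.card W :=
    Nat.card_le_card_of_injective Subtype.val Subtype.val_injective
  have hcW : Nat.card W = Fintype.card W := Nat.card_eq_fintype_card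
  omega

end PaperMetricDim
end

section
/- Let G be a connected simple graph of order n with diam(G) = 2 and β(G) = n − 3. Then for each vertex v of G with Γ_2(v) ≠ ∅, at least one of the sets Γ_1(v) and Γ_2(v) is homogeneous. -/
namespace PaperMetricDim

open SimpleGraph

variable {V : Type*}

lemma exists_internal_triple (G : SimpleGraph V) {S : Set V} (h : ¬ Homogeneous G S) :
    ∃ x ∈ S, ∃ y ∈ S, ∃ z ∈ S, x ≠ y ∧ z ≠ x ∧ z ≠ y ∧ G.Adj z x ∧ ¬ G.Adj z y := by
  rw [Homogeneous, not_or] at h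
  obtain ⟨h1, h2⟩ := h
  push_neg at h1 h2
  obtain ⟨a, ha, b, hb, hab, hnadj⟩ := h1
  obtain ⟨e, he, f, hf, hadj⟩ := h2
  by_cases hfa : f = a
  · subst hfa
    refine ⟨e, he, b, hb, f, hf, ?_, hadj.ne', hab, hadj.symm, hnadj⟩
    rintro rfl; exact hnadj hadj.symm
  by_cases hfb : f = b
  · subst hfb
    refine ⟨e, he, a, ha, f, hf, ?_, hadj.ne', hab.symm, hadj.symm,
      fun hx => hnadj hx.symm⟩
    rintro rfl; exact hnadj hadj
  by_cases hea : e = a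
  · subst hea
    refine ⟨f, hf, b, hb, e, he, ?_, hadj.ne, hab, hadj, hnadj⟩
    rintro rfl; exact hnadj hadj
  by_cases heb : e = b
  · subst heb
    refine ⟨f, hf, a, ha, e, he, ?_, hadj.ne, hab.symm, hadj,
      fun hx => hnadj hx.symm⟩
    rintro rfl; exact hnadj hadj.symm
  · by_cases hfa2 : G.Adj f a
    · exact ⟨f, hf, b, hb, a, ha, hfb, hfa2.ne', hab, hfa2.symm, hnadj⟩
    · exact ⟨e, he, a, ha, f, hf, hea, hadj.ne', hfa, hadj.symm, hfa2⟩


/-- If `G` is connected of order `n` with diameter 2 and `β(G) = n - 3`, then for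
every vertex `v` with `Γ_2(v) ≠ ∅`, at least one of `Γ_1(v)`, `Γ_2(v)` is
homogeneous. -/
theorem gamma_one_or_gamma_two_homogeneous
    {V : Type*} [Fintype V] (G : SimpleGraph V)
    (hdiam : diamEq G 2)
    (hbeta : metricDim G = Fintype.card V - 3)
    (v : V) (hv : (Gamma G 2 v).Nonempty) :
    Homogeneous G (Gamma G 1 v) ∨ Homogeneous G (Gamma G 2 v) := by
  classical
  by_contra hcon
  push_neg at hcon
  obtain ⟨h1, h2⟩ := hcon
  obtain ⟨hconn, hle, -⟩ := hdiam
  obtain ⟨x₁, hx₁, y₁, hy₁, z₁, hz₁, hxy₁, hzx₁, hzy₁, hadj₁, hnadj₁⟩ :=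
    exists_internal_triple G h1
  obtain ⟨x₂, hx₂, y₂, hy₂, z₂, hz₂, hxy₂, hzx₂, hzy₂, hadj₂, hnadj₂⟩ :=
    exists_internal_triple G h2
  have dx₁ : G.dist x₁ v = 1 := hx₁
  have dy₁ : G.dist y₁ v = 1 := hy₁
  have dz₁ : G.dist z₁ v = 1 := hz₁
  have dx₂ : G.dist x₂ v = 2 := hx₂
  have dy₂ : G.dist y₂ v = 2 := hy₂
  have dz₂ : G.dist z₂ v = 2 := hz₂
  have dist2 : ∀ a b : V, a ≠ b → ¬ G.Adj a b → G.dist a b = 2 := by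
    intro a b hne hn
    have h0 : G.dist a b ≠ 0 := fun h => hne (hconn.dist_eq_zero_iff.mp h)
    have h1 : G.dist a b ≠ 1 := fun h => hn (dist_eq_one_iff_adj.mp h)
    have := hle a b
    omega
  -- distinctness from v
  have hne1 : ∀ a : V, G.dist a v = 1 → a ≠ v := by
    intro a h hav; rw [hav, dist_self] at h; omega
  have hne2 : ∀ a : V, G.dist a v = 2 → a ≠ v := by
    intro a h hav; rw [hav, dist_self] at h; omega
  have hne12 : ∀ a b : V, G.dist a v = 1 → G.dist b v = 2 → a ≠ b := by
    intro a b h1' h2' hab; rw [hab, h2'] at h1'; omega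
  have hvx₁ := hne1 x₁ dx₁
  have hvy₁ := hne1 y₁ dy₁
  have hvx₂ := hne2 x₂ dx₂
  have hvy₂ := hne2 y₂ dy₂
  have hx₁x₂ := hne12 x₁ x₂ dx₁ dx₂
  have hx₁y₂ := hne12 x₁ y₂ dx₁ dy₂
  have hy₁x₂ := hne12 y₁ x₂ dy₁ dx₂
  have hy₁y₂ := hne12 y₁ y₂ dy₁ dy₂
  set T : Set V := {x₁, y₁, x₂, y₂} with hT
  set W : Set V := Set.univ \ T with hW
  have hvW : v ∈ W := by
    simp only [hW, hT, Set.mem_diff, Set.mem_univ, true_and, Set.mem_insert_iff,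
      Set.mem_singleton_iff]
    push_neg
    exact ⟨hvx₁.symm, hvy₁.symm, hvx₂.symm, hvy₂.symm⟩
  have hz₁W : z₁ ∈ W := by
    simp only [hW, hT, Set.mem_diff, Set.mem_univ, true_and, Set.mem_insert_iff,
      Set.mem_singleton_iff]
    push_neg
    exact ⟨hzx₁, hzy₁, hne12 z₁ x₂ dz₁ dx₂, hne12 z₁ y₂ dz₁ dy₂⟩
  have hz₂W : z₂ ∈ W := by
    simp only [hW, hT, Set.mem_diff, Set.mem_univ, true_and, Set.mem_insert_iff,
      Set.mem_singleton_iff]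
    push_neg
    exact ⟨(hne12 x₁ z₂ dx₁ dz₂).symm, (hne12 y₁ z₂ dy₁ dz₂).symm, hzx₂, hzy₂⟩
  have R11 : ∃ w ∈ W, G.dist x₁ w ≠ G.dist y₁ w := by
    refine ⟨z₁, hz₁W, ?_⟩
    rw [dist_eq_one_iff_adj.mpr hadj₁.symm,
      dist2 y₁ z₁ (Ne.symm hzy₁) (fun h => hnadj₁ h.symm)]
    omega
  have R22 : ∃ w ∈ W, G.dist x₂ w ≠ G.dist y₂ w := by
    refine ⟨z₂, hz₂W, ?_⟩
    rw [dist_eq_one_iff_adj.mpr hadj₂.symm,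
      dist2 y₂ z₂ (Ne.symm hzy₂) (fun h => hnadj₂ h.symm)]
    omega
  have Rcross : ∀ a b : V, G.dist a v = 1 → G.dist b v = 2 →
      ∃ w ∈ W, G.dist a w ≠ G.dist b w := by
    intro a b h1' h2'
    exact ⟨v, hvW, by rw [h1', h2']; omega⟩
  have symmP : ∀ {a b : V}, (∃ w ∈ W, G.dist a w ≠ G.dist b w) →
      ∃ w ∈ W, G.dist b w ≠ G.dist a w := by
    rintro a b ⟨w, hw, h⟩; exact ⟨w, hw, h.symm⟩
  have hres : Resolves G W := by
    intro u u' hne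
    by_cases hu : u ∈ T
    swap
    · refine ⟨u, ⟨Set.mem_univ u, hu⟩, ?_⟩
      rw [dist_self]
      intro h
      exact hne (hconn.dist_eq_zero_iff.mp h.symm).symm
    by_cases hu' : u' ∈ T
    swap
    · refine ⟨u', ⟨Set.mem_univ u', hu'⟩, ?_⟩
      rw [dist_self]
      intro h
      exact hne (hconn.dist_eq_zero_iff.mp h)
    simp only [hT, Set.mem_insert_iff, Set.mem_singleton_iff] at hu hu'
    rcases hu with rfl | rfl | rfl | rfl <;> rcases hu' with rfl | rfl | rfl | rfl
    · exact absurd rfl hne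
    · exact R11
    · exact Rcross _ _ dx₁ dx₂
    · exact Rcross _ _ dx₁ dy₂
    · exact symmP R11
    · exact absurd rfl hne
    · exact Rcross _ _ dy₁ dx₂
    · exact Rcross _ _ dy₁ dy₂
    · exact symmP (Rcross _ _ dx₁ dx₂)
    · exact symmP (Rcross _ _ dy₁ dx₂)
    · exact absurd rfl hne
    · exact R22
    · exact symmP (Rcross _ _ dx₁ dy₂)
    · exact symmP (Rcross _ _ dy₁ dy₂)
    · exact symmP R22
    · exact absurd rfl hne
  have hTcard : T.ncard = 4 := by
    rw [hT, Set.ncard_insert_of_notMem (by simp [hxy₁, hx₁x₂, hx₁y₂]),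
      Set.ncard_insert_of_notMem (by simp [hy₁x₂, hy₁y₂]),
      Set.ncard_insert_of_notMem (by simp [hxy₂]), Set.ncard_singleton]
  have hWcard : W.ncard = Fintype.card V - 4 := by
    rw [hW, Set.ncard_diff (Set.subset_univ T), hTcard, Set.ncard_univ,
      Nat.card_eq_fintype_card]
  have hle4 : metricDim G ≤ Fintype.card V - 4 :=
    Nat.sInf_le ⟨W, hres, hWcard⟩
  have h5 : ({v, x₁, y₁, x₂, y₂} : Finset V).card ≤ Fintype.card V :=
    Finset.card_le_univ _
  have h5' : ({v, x₁, y₁, x₂, y₂} : Finset V).card = 5 := by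
    rw [Finset.card_insert_of_notMem (by simp [hvx₁.symm, hvy₁.symm, hvx₂.symm, hvy₂.symm]),
      Finset.card_insert_of_notMem (by simp [hxy₁, hx₁x₂, hx₁y₂]),
      Finset.card_insert_of_notMem (by simp [hy₁x₂, hy₁y₂]),
      Finset.card_insert_of_notMem (by simp [hxy₂]), Finset.card_singleton]
  rw [hbeta] at hle4
  rw [h5'] at h5
  omega

end PaperMetricDim
end

section
/- Let G be a connected simple graph of order n with diam(G) = 2 and β(G) = n − 3, with twin graph G*, and let v be a vertex of G such that Γ_2^*(v^*) ≠ ∅ and Γ_1(v) is homogeneous. Then |R_1^*(v^*)| ≤ 2. -/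
namespace PaperMetricDim

open SimpleGraph

variable {V : Type*}

section Aux

variable {G : SimpleGraph V}

lemma twins_symm {u w : V} (h : Twins G u w) : Twins G w u :=
  ⟨h.1.symm, h.2.symm⟩

lemma twinRel_refl (u : V) : twinRel G u u := Or.inl rfl

lemma twinRel_symm {u w : V} (h : twinRel G u w) : twinRel G w u := by
  rcases h with rfl | h
  · exact Or.inl rfl
  · exact Or.inr (twins_symm h)

lemma twins_trans_aux {a b c : V} (hab : Twins G a b) (hbc : Twins G b c) (hac : a ≠ c) :
    G.neighborSet a \ {c} ⊆ G.neighborSet c \ {a} := by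
  obtain ⟨hab_ne, hab_set⟩ := hab
  obtain ⟨hbc_ne, hbc_set⟩ := hbc
  rintro x ⟨hx, hxc⟩
  simp only [SimpleGraph.mem_neighborSet] at hx
  simp only [Set.mem_singleton_iff] at hxc
  refine ⟨?_, by simpa using hx.ne'⟩
  simp only [SimpleGraph.mem_neighborSet]
  by_cases hxb : x = b
  · subst hxb
    -- a is adjacent to b; show c adjacent to b
    have h1 : a ∈ G.neighborSet x \ {c} := ⟨hx.symm, by simpa using hac⟩
    rw [hbc_set] at h1
    have h2 : G.Adj c a := h1.1
    have h3 : c ∈ G.neighborSet a \ {x} := ⟨h2.symm, by simpa using hbc_ne.symm⟩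
    rw [hab_set] at h3
    exact h3.1.symm
  · have h1 : x ∈ G.neighborSet a \ {b} := ⟨hx, by simpa using hxb⟩
    rw [hab_set] at h1
    have h2 : x ∈ G.neighborSet b \ {c} := ⟨h1.1, by simpa using hxc⟩
    rw [hbc_set] at h2
    exact h2.1

lemma twins_trans {a b c : V} (hab : Twins G a b) (hbc : Twins G b c) (hac : a ≠ c) :
    Twins G a c :=
  ⟨hac, Set.Subset.antisymm (twins_trans_aux hab hbc hac)
    (twins_trans_aux (twins_symm hbc) (twins_symm hab) hac.symm)⟩

lemma twinRel_trans {a b c : V} (hab : twinRel G a b) (hbc : twinRel G b c) :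
    twinRel G a c := by
  rcases hab with rfl | hab
  · exact hbc
  rcases hbc with rfl | hbc
  · exact Or.inr hab
  by_cases hac : a = c
  · exact Or.inl hac
  · exact Or.inr (twins_trans hab hbc hac)

lemma twinClass_eq {u w : V} (h : twinRel G u w) : twinClass G u = twinClass G w :=
  Set.ext fun x => ⟨fun hx => twinRel_trans (twinRel_symm h) hx,
    fun hx => twinRel_trans h hx⟩

lemma mem_twinClass_self (u : V) : u ∈ twinClass G u := Or.inl rfl

lemma class_eq_of_mem {A : TwinVertex G} {a : V} (ha : a ∈ A.1) :
    A.1 = twinClass G a := by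
  obtain ⟨u, hu⟩ := A.2
  rw [hu] at ha ⊢
  exact twinClass_eq ha

lemma tv_eq_of_mem {A B : TwinVertex G} {a : V} (ha : a ∈ A.1) (hb : a ∈ B.1) :
    A = B :=
  Subtype.ext ((class_eq_of_mem ha).trans (class_eq_of_mem hb).symm)

lemma rel_of_mem_mem {A : TwinVertex G} {a b : V} (ha : a ∈ A.1) (hb : b ∈ A.1) :
    twinRel G a b := by
  rw [class_eq_of_mem ha] at hb
  exact hb

lemma adj_step {a a' b : V} (h : twinRel G a a') (hadj : G.Adj a' b) (hne : a ≠ b) :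
    G.Adj a b := by
  rcases h with rfl | ⟨hne', hset⟩
  · exact hadj
  · have hb : b ∈ G.neighborSet a' \ {a} := ⟨hadj, by simpa using hne.symm⟩
    rw [← hset] at hb
    exact hb.1

lemma adj_of_classes {A B : TwinVertex G} (hAB : (twinGraph G).Adj A B)
    {a b : V} (ha : a ∈ A.1) (hb : b ∈ B.1) : G.Adj a b := by
  obtain ⟨hne, a', ha', b', hb', hadj⟩ := hAB
  have hab' : a ≠ b' := fun h => hne (tv_eq_of_mem ha (h ▸ hb'))
  have hab : a ≠ b := fun h => hne (tv_eq_of_mem ha (h ▸ hb))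
  have h1 : G.Adj a b' := adj_step (rel_of_mem_mem ha ha') hadj hab'
  have h2 : G.Adj b a := adj_step (rel_of_mem_mem hb hb') h1.symm hab.symm
  exact h2.symm

/-- Separating two adjacent non-twin neighbours of `v` when `Γ₁(v)` is homogeneous:
auxiliary one-sided version. -/
lemma exists_sep_aux (hconn : G.Connected) (hdle : ∀ u w : V, G.dist u w ≤ 2)
    {v p q r x : V} (hhom : Homogeneous G (Gamma G 1 v))
    (hpv : G.Adj p v) (hqv : G.Adj q v) (hrv : G.Adj r v)
    (hpr : p ≠ r) (hqr : q ≠ r)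
    (h1 : G.Adj p x) (h2 : x ≠ q) (h3 : ¬ G.Adj q x) :
    x ≠ v ∧ x ≠ p ∧ x ≠ q ∧ x ≠ r ∧ G.dist p x ≠ G.dist q x := by
  have hxp : x ≠ p := h1.ne'
  have hxv : x ≠ v := fun h => h3 (h ▸ hqv)
  have hpGam : p ∈ Gamma G 1 v := SimpleGraph.dist_eq_one_iff_adj.mpr hpv
  have hqGam : q ∈ Gamma G 1 v := SimpleGraph.dist_eq_one_iff_adj.mpr hqv
  have hrGam : r ∈ Gamma G 1 v := SimpleGraph.dist_eq_one_iff_adj.mpr hrv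
  have hxr : x ≠ r := by
    intro h
    subst h
    rcases hhom with hcom | hemp
    · exact h3 (hcom q hqGam x hrGam (fun h => h2 h.symm))
    · exact hemp p hpGam x hrGam h1
  have hd1 : G.dist p x = 1 := SimpleGraph.dist_eq_one_iff_adj.mpr h1
  have hd2 : G.dist q x = 2 := by
    have hpos := hconn.pos_dist_of_ne (fun h : q = x => h2 h.symm)
    have hle := hdle q x
    have hne1 : G.dist q x ≠ 1 := fun h => h3 (SimpleGraph.dist_eq_one_iff_adj.mp h)
    omega
  exact ⟨hxv, hxp, h2, hxr, by omega⟩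

/-- Separating two non-twin neighbours of `v` when `Γ₁(v)` is homogeneous. -/
lemma exists_sep (hconn : G.Connected) (hdle : ∀ u w : V, G.dist u w ≤ 2)
    {v p q r : V} (hhom : Homogeneous G (Gamma G 1 v))
    (hpv : G.Adj p v) (hqv : G.Adj q v) (hrv : G.Adj r v)
    (hpq : p ≠ q) (hpr : p ≠ r) (hqr : q ≠ r)
    (hnt : ¬ Twins G p q) :
    ∃ x : V, x ≠ v ∧ x ≠ p ∧ x ≠ q ∧ x ≠ r ∧ G.dist p x ≠ G.dist q x := by
  have hset : G.neighborSet p \ {q} ≠ G.neighborSet q \ {p} := fun h => hnt ⟨hpq, h⟩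
  have hx : ∃ x : V, ¬ ((G.Adj p x ∧ ¬ x = q) ↔ (G.Adj q x ∧ ¬ x = p)) := by
    by_contra hc
    push_neg at hc
    apply hset
    ext x
    simp only [Set.mem_diff, SimpleGraph.mem_neighborSet, Set.mem_singleton_iff]
    exact hc x
  obtain ⟨x, hx⟩ := hx
  by_cases hL : G.Adj p x ∧ ¬ x = q
  · have hR : ¬ (G.Adj q x ∧ ¬ x = p) := fun h => hx (iff_of_true hL h)
    have hnq : ¬ G.Adj q x := fun h => hR ⟨h, fun e => hL.1.ne' e⟩
    obtain ⟨hv', hp', hq', hr', hd⟩ :=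
      exists_sep_aux hconn hdle hhom hpv hqv hrv hpr hqr hL.1 hL.2 hnq
    exact ⟨x, hv', hp', hq', hr', hd⟩
  · have hR : G.Adj q x ∧ ¬ x = p := by
      by_contra h
      exact hx (iff_of_false hL h)
    have hnp : ¬ G.Adj p x := fun h => hL ⟨h, fun e => hR.1.ne' e⟩
    obtain ⟨hv', hq', hp', hr', hd⟩ :=
      exists_sep_aux hconn hdle hhom hqv hpv hrv hqr hpr hR.1 hR.2 hnp
    exact ⟨x, hv', hp', hq', hr', hd.symm⟩

end Aux

/-- If `G` is connected of order `n`, `diam(G) = 2`, `β(G) = n - 3`, and `v` is a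
vertex with `Γ_2^*(v^*) ≠ ∅` and `Γ_1(v)` homogeneous, then `|R_1^*(v^*)| ≤ 2`. -/
theorem R1Star_card_le_two
    {V : Type*} [Fintype V] (G : SimpleGraph V)
    (hdiam : diamEq G 2)
    (hbeta : metricDim G = Fintype.card V - 3)
    (v : V) (h2 : (GammaStar G 2 v).Nonempty)
    (hhom : Homogeneous G (Gamma G 1 v)) :
    (R1Star G v).ncard ≤ 2 := by
  classical
  by_contra hcon
  push_neg at hcon
  obtain ⟨hconn, hdle, -⟩ := hdiam
  haveI : Finite (TwinVertex G) := by
    unfold TwinVertex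
    infer_instance
  obtain ⟨A, hA, B, hB, C, hC, hABne, hACne, hBCne⟩ :=
    (Set.two_lt_ncard (Set.toFinite _)).mp hcon
  -- basic distance facts
  have hadj1 : ∀ {x y : V}, G.Adj x y → G.dist x y = 1 :=
    fun h => SimpleGraph.dist_eq_one_iff_adj.mpr h
  have hdist2 : ∀ {x y : V}, x ≠ y → ¬ G.Adj x y → G.dist x y = 2 := by
    intro x y hxy hna
    have h1 := hconn.pos_dist_of_ne hxy
    have h2 := hdle x y
    have h3 : G.dist x y ≠ 1 := fun h => hna (SimpleGraph.dist_eq_one_iff_adj.mp h)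
    omega
  have hvmem : v ∈ (cls G v).1 := Or.inl rfl
  -- extract representatives and external witnesses for each class in R₁*
  have getinfo : ∀ X : TwinVertex G, X ∈ R1Star G v →
      ∃ x ∈ X.1, G.Adj x v ∧ ∃ e : V, G.dist e v = 2 ∧ G.Adj x e := by
    rintro X ⟨hX1, E, hE2, hXE⟩
    have hX1' : (twinGraph G).dist X (cls G v) = 1 := hX1
    have hE2' : (twinGraph G).dist E (cls G v) = 2 := hE2
    have hadjXv : (twinGraph G).Adj X (cls G v) :=
      SimpleGraph.dist_eq_one_iff_adj.mp hX1'
    obtain ⟨u, hu⟩ := X.2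
    have hx : u ∈ X.1 := by rw [hu]; exact mem_twinClass_self u
    have hxv : G.Adj u v := adj_of_classes hadjXv hx hvmem
    obtain ⟨w, hw⟩ := E.2
    have he : w ∈ E.1 := by rw [hw]; exact mem_twinClass_self w
    have hEne : E ≠ cls G v := by
      intro h
      rw [h, SimpleGraph.dist_self] at hE2'
      exact absurd hE2' (by omega)
    have hEnadj : ¬ (twinGraph G).Adj E (cls G v) := by
      intro h
      have := SimpleGraph.dist_eq_one_iff_adj.mpr h
      rw [hE2'] at this
      exact absurd this (by omega)
    have hwv : w ≠ v := fun h => hEne (tv_eq_of_mem he (h ▸ hvmem))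
    have hwnadj : ¬ G.Adj w v := fun h => hEnadj ⟨hEne, w, he, v, hvmem, h⟩
    exact ⟨u, hx, hxv, w, hdist2 hwv hwnadj, adj_of_classes hXE hx he⟩
  obtain ⟨a, haA, hav, ea, hea2, haea⟩ := getinfo A hA
  obtain ⟨b, hbB, hbv, eb, heb2, hbeb⟩ := getinfo B hB
  obtain ⟨c, hcC, hcv, ec, hec2, hcec⟩ := getinfo C hC
  -- distinctness of a, b, c
  have hab : a ≠ b := fun h => hABne (tv_eq_of_mem haA (h ▸ hbB))
  have hac : a ≠ c := fun h => hACne (tv_eq_of_mem haA (h ▸ hcC))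
  have hbc : b ≠ c := fun h => hBCne (tv_eq_of_mem hbB (h ▸ hcC))
  -- non-twin facts
  have hnt : ∀ {X Y : TwinVertex G} {x y : V}, X ≠ Y → x ∈ X.1 → y ∈ Y.1 →
      ¬ Twins G x y := by
    intro X Y x y hXY hx hy ht
    have hyX : y ∈ X.1 := by
      rw [class_eq_of_mem hx]
      exact Or.inr ht
    exact hXY (tv_eq_of_mem hyX hy)
  have hntab : ¬ Twins G a b := hnt hABne haA hbB
  have hntac : ¬ Twins G a c := hnt hACne haA hcC
  have hntbc : ¬ Twins G b c := hnt hBCne hbB hcC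
  -- the candidate small resolving set complement
  set S : Set V := {v, a, b, c} with hS
  have hmemS : ∀ z : V, z ∈ S ↔ (z = v ∨ z = a ∨ z = b ∨ z = c) := by
    intro z
    simp [hS]
  -- witnesses for pairs (v, x)
  have pair_v : ∀ x e : V, G.Adj x v → G.dist e v = 2 → G.Adj x e →
      ∃ w ∈ Sᶜ, G.dist v w ≠ G.dist x w := by
    intro x e hxv he2 hxe
    have hev : e ≠ v := by
      intro h
      rw [h, SimpleGraph.dist_self] at he2
      exact absurd he2 (by omega)
    have hne' : ∀ z : V, G.Adj z v → e ≠ z := by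
      intro z hzv h
      rw [h, hadj1 hzv] at he2
      exact absurd he2 (by omega)
    have heS : e ∈ Sᶜ := by
      simp only [Set.mem_compl_iff, hmemS, not_or]
      exact ⟨hev, hne' a hav, hne' b hbv, hne' c hcv⟩
    refine ⟨e, heS, ?_⟩
    rw [SimpleGraph.dist_comm] at he2
    rw [he2, hadj1 hxe]
    omega
  have hva := pair_v a ea hav hea2 haea
  have hvb := pair_v b eb hbv heb2 hbeb
  have hvc := pair_v c ec hcv hec2 hcec
  -- witnesses for pairs among a, b, c
  have pair_2 : ∀ p q r : V, G.Adj p v → G.Adj q v → G.Adj r v → p ≠ q → p ≠ r →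
      q ≠ r → ¬ Twins G p q →
      (a = p ∨ a = q ∨ a = r) → (b = p ∨ b = q ∨ b = r) → (c = p ∨ c = q ∨ c = r) →
      ∃ w ∈ Sᶜ, G.dist p w ≠ G.dist q w := by
    intro p q r hpv hqv hrv hpq hpr hqr hntpq hpa hpb hpc
    obtain ⟨x, hxv, hxp, hxq, hxr, hd⟩ :=
      exists_sep hconn hdle hhom hpv hqv hrv hpq hpr hqr hntpq
    refine ⟨x, ?_, hd⟩
    simp only [Set.mem_compl_iff, hmemS, not_or]
    refine ⟨hxv, ?_, ?_, ?_⟩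
    · rcases hpa with rfl | rfl | rfl <;> assumption
    · rcases hpb with rfl | rfl | rfl <;> assumption
    · rcases hpc with rfl | rfl | rfl <;> assumption
  have hab2 : ∃ w ∈ Sᶜ, G.dist a w ≠ G.dist b w :=
    pair_2 a b c hav hbv hcv hab hac hbc hntab (Or.inl rfl) (Or.inr (Or.inl rfl))
      (Or.inr (Or.inr rfl))
  have hac2 : ∃ w ∈ Sᶜ, G.dist a w ≠ G.dist c w :=
    pair_2 a c b hav hcv hbv hac hab hbc.symm hntac (Or.inl rfl)
      (Or.inr (Or.inr rfl)) (Or.inr (Or.inl rfl))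
  have hbc2 : ∃ w ∈ Sᶜ, G.dist b w ≠ G.dist c w :=
    pair_2 b c a hbv hcv hav hbc hab.symm hac.symm hntbc (Or.inr (Or.inr rfl))
      (Or.inl rfl) (Or.inr (Or.inl rfl))
  have flip : ∀ {z z' : V}, (∃ w ∈ Sᶜ, G.dist z w ≠ G.dist z' w) →
      (∃ w ∈ Sᶜ, G.dist z' w ≠ G.dist z w) := by
    rintro z z' ⟨w, h1, h2⟩
    exact ⟨w, h1, h2.symm⟩
  -- Sᶜ resolves G
  have hres : Resolves G Sᶜ := by
    intro u u' hne
    by_cases hu : u ∈ S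
    · by_cases hu' : u' ∈ S
      · rcases (hmemS u).mp hu with rfl | rfl | rfl | rfl <;>
          rcases (hmemS u').mp hu' with rfl | rfl | rfl | rfl <;>
          first
            | exact absurd rfl hne
            | exact hva
            | exact flip hva
            | exact hvb
            | exact flip hvb
            | exact hvc
            | exact flip hvc
            | exact hab2
            | exact flip hab2
            | exact hac2
            | exact flip hac2
            | exact hbc2
            | exact flip hbc2
      · refine ⟨u', hu', ?_⟩
        rw [SimpleGraph.dist_self]
        exact (hconn.pos_dist_of_ne hne).ne'
    · refine ⟨u, hu, ?_⟩
      rw [SimpleGraph.dist_self]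
      exact (hconn.pos_dist_of_ne hne.symm).ne
  -- cardinality count
  have hS4 : S.ncard = 4 := by
    rw [hS]
    rw [Set.ncard_insert_of_notMem (by
        simp only [Set.mem_insert_iff, Set.mem_singleton_iff, not_or]
        exact ⟨hav.ne', hbv.ne', hcv.ne'⟩) (Set.toFinite _),
      Set.ncard_insert_of_notMem (by
        simp only [Set.mem_insert_iff, Set.mem_singleton_iff, not_or]
        exact ⟨hab, hac⟩) (Set.toFinite _),
      Set.ncard_insert_of_notMem (by simpa using hbc) (Set.toFinite _),
      Set.ncard_singleton]
  have hle : metricDim G ≤ Sᶜ.ncard := Nat.sInf_le ⟨Sᶜ, hres, rfl⟩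
  have hsum : S.ncard + Sᶜ.ncard = Nat.card V :=
    Set.ncard_add_ncard_compl S (Set.toFinite _) (Set.toFinite _)
  rw [Nat.card_eq_fintype_card] at hsum
  rw [hbeta] at hle
  omega

end PaperMetricDim
end
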